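/- (Nash inequality ⟹ algebraic decay.) Let (P_t) be a symmetric Markov semigroup with invariant probability measure π, Dirichlet form D, and suppose the Nash inequality Var(f) ≤ C D(f)^{1/p} ‖f‖_1^{2/q} holds for all f ∈ 𝒟(D), where p ∈ (1,∞) and 1/p + 1/q = 1. Then there is a constant C' (depending only on C, p) such that Var(P_t f) ≤ C' ‖f‖_1² t^{1-q} for all t > 0 and f ∈ L¹ ∩ L²(π). -/

import Mathlib

open MeasureTheory

/-- Nash inequality ⟹ algebraic decay: if Var(f) ≤ C D(f)^{1/p} ‖f‖₁^{2/q}, then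
Var(P_t f) ≤ C' ‖f‖₁² t^{1-q}. -/
theorem stmt9 {E : Type*} [MeasurableSpace E] (π : Measure E) [IsProbabilityMeasure π]
    (P : ℝ → (E → ℝ) → (E → ℝ)) (Dform : (E → ℝ) → ℝ)
    (Var : (E → ℝ) → ℝ)
    (hVar : ∀ f, Var f = (∫ x, (f x)^2 ∂π) - (∫ x, f x ∂π)^2)
    (p q C : ℝ) (hp : 1 < p) (hpq : 1/p + 1/q = 1) (hC : 0 < C)
    (hDnn : ∀ f, 0 ≤ Dform f)
    (hP0 : ∀ f, P 0 f = f)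
    (hcontr : ∀ f, ∀ t ≥ (0:ℝ), (∫ x, |P t f x| ∂π) ≤ ∫ x, |f x| ∂π)
    (hderiv : ∀ f t, HasDerivAt (fun s => Var (P s f)) (-2 * Dform (P t f)) t)
    (hNash : ∀ f, Var f ≤ C * (Dform f) ^ (1/p) * (∫ x, |f x| ∂π) ^ (2/q)) :
    ∃ C' : ℝ, 0 < C' ∧ ∀ f, ∀ t > (0:ℝ),
      Var (P t f) ≤ C' * (∫ x, |f x| ∂π)^2 * t ^ (1-q) := by
  have hp0 : 0 < p := lt_trans one_pos hp
  have hpne : p ≠ 0 := ne_of_gt hp0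
  have hq0 : q ≠ 0 := by
    intro h
    have h1 : 1/p = 1 := by rw [h] at hpq; simpa using hpq
    rw [div_eq_one_iff_eq hpne] at h1
    exact absurd h1 (ne_of_lt hp)
  have hpq' : p + q = p * q := by
    field_simp at hpq
    linarith
  have hq1 : 1 < q := by
    rcases lt_trichotomy q 1 with h | h | h
    · rcases lt_trichotomy q 0 with h2 | h2 | h2
      · nlinarith
      · exact absurd h2 hq0
      · nlinarith
    · exfalso; rw [h] at hpq'; nlinarith
    · exact h
  have hqpos : 0 < q := lt_trans one_pos hq1
  have hid1 : (1 - p) * (1 - q) = 1 := by nlinarith [hpq']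
  have hid2 : (-p) * (1 - q) = q := by nlinarith [hpq']
  have h1q : 1 - q < 0 := by linarith
  set C' := (2 * (p - 1)) ^ (1 - q) * C ^ q with hC'def
  have hC'pos : 0 < C' :=
    mul_pos (Real.rpow_pos_of_pos (by linarith) _) (Real.rpow_pos_of_pos hC _)
  refine ⟨C', hC'pos, ?_⟩
  intro f t ht
  set N := ∫ x, |f x| ∂π with hNdef
  have hN0 : 0 ≤ N := integral_nonneg fun x => abs_nonneg _
  set u : ℝ → ℝ := fun s => Var (P s f) with hudef
  have hu : ∀ s, HasDerivAt u (-2 * Dform (P s f)) s := hderiv f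
  have hanti : Antitone u := by
    apply antitone_of_deriv_nonpos (fun s => (hu s).differentiableAt)
    intro s
    rw [(hu s).deriv]
    nlinarith [hDnn (P s f)]
  rcases eq_or_lt_of_le hN0 with hN | hNpos
  · -- N = 0 case
    have hNt : (∫ x, |P t f x| ∂π) = 0 := by
      refine le_antisymm ?_ (integral_nonneg fun x => abs_nonneg _)
      calc (∫ x, |P t f x| ∂π) ≤ N := hcontr f t ht.le
        _ = 0 := hN.symm
    have h2 := hNash (P t f)
    rw [hNt, Real.zero_rpow (ne_of_gt (by positivity : (0:ℝ) < 2/q)), mul_zero] at h2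
    have h3 : C' * N ^ 2 * t ^ (1 - q) = 0 := by rw [← hN]; ring
    rw [h3]
    exact h2
  · by_cases hut : Var (P t f) ≤ 0
    · have : 0 ≤ C' * N ^ 2 * t ^ (1 - q) := by
        have := Real.rpow_pos_of_pos ht (1 - q)
        positivity
      linarith
    push_neg at hut
    have hutu : 0 < u t := hut
    have hupos : ∀ s ∈ Set.Icc (0:ℝ) t, 0 < u s := fun s hs =>
      lt_of_lt_of_le hutu (hanti hs.2)
    set K := C * N ^ (2/q) with hKdef
    have hK : 0 < K := mul_pos hC (Real.rpow_pos_of_pos hNpos _)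
    have hD : ∀ s ∈ Set.Icc (0:ℝ) t, (u s / K) ^ p ≤ Dform (P s f) := by
      intro s hs
      have hNs : (∫ x, |P s f x| ∂π) ≤ N := hcontr f s hs.1
      have hNs0 : 0 ≤ ∫ x, |P s f x| ∂π := integral_nonneg fun x => abs_nonneg _
      have h1 : u s ≤ K * Dform (P s f) ^ (1/p) := by
        calc u s ≤ C * Dform (P s f) ^ (1/p) * (∫ x, |P s f x| ∂π) ^ (2/q) := hNash _
          _ ≤ C * Dform (P s f) ^ (1/p) * N ^ (2/q) := by
              apply mul_le_mul_of_nonneg_left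
                (Real.rpow_le_rpow hNs0 hNs (by positivity))
              have := Real.rpow_nonneg (hDnn (P s f)) (1/p)
              positivity
          _ = K * Dform (P s f) ^ (1/p) := by ring
      have h2 : u s / K ≤ Dform (P s f) ^ (1/p) := by
        rw [div_le_iff₀ hK]
        linarith [h1, mul_comm K (Dform (P s f) ^ (1/p))]
      calc (u s / K) ^ p ≤ (Dform (P s f) ^ (1/p)) ^ p :=
            Real.rpow_le_rpow (div_nonneg (hupos s hs).le hK.le) h2 hp0.le
        _ = Dform (P s f) := by
            rw [← Real.rpow_mul (hDnn _), one_div, inv_mul_cancel₀ hpne, Real.rpow_one]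
    set κ := 2 * (p - 1) * K ^ (-p) with hκdef
    have hκ : 0 < κ := mul_pos (by linarith) (Real.rpow_pos_of_pos hK _)
    set g : ℝ → ℝ := fun s => u s ^ (1 - p) - κ * s with hgdef
    have hg' : ∀ s ∈ Set.Icc (0:ℝ) t,
        HasDerivAt g ((1 - p) * u s ^ (1 - p - 1) * (-2 * Dform (P s f)) - κ) s := by
      intro s hs
      have h1 := (hu s).rpow_const (p := 1 - p) (Or.inl (hupos s hs).ne')
      have h2 : HasDerivAt (fun x : ℝ => κ * x) κ s := by
        simpa using (hasDerivAt_id s).const_mul κ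
      have := h1.sub h2
      convert this using 2
      any_goals rfl
      ring
    have hmono : MonotoneOn g (Set.Icc 0 t) := by
      apply monotoneOn_of_deriv_nonneg (convex_Icc 0 t)
      · apply ContinuousOn.sub
        · exact ContinuousOn.rpow_const
            (fun s _ => ((hu s).differentiableAt.continuousAt).continuousWithinAt)
            (fun s hs => Or.inl (hupos s hs).ne')
        · exact (continuous_const.mul continuous_id).continuousOn
      · intro s hs
        rw [interior_Icc] at hs
        exact (hg' s (Set.mem_Icc_of_Ioo hs)).differentiableAt.differentiableWithinAt
      · intro s hs
        rw [interior_Icc] at hs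
        have hs' := Set.mem_Icc_of_Ioo hs
        rw [(hg' s hs').deriv]
        have hus := hupos s hs'
        have hDs := hD s hs'
        have e1 : (u s / K) ^ p = u s ^ p * K ^ (-p) := by
          rw [Real.div_rpow hus.le hK.le, Real.rpow_neg hK.le, div_eq_mul_inv]
        have e2 : u s ^ (1 - p - 1) = u s ^ (-p) := by norm_num
        have e3 : u s ^ (-p) * u s ^ p = 1 := by
          rw [← Real.rpow_add hus]; norm_num
        have e4 : (0:ℝ) < u s ^ (-p) := Real.rpow_pos_of_pos hus _
        have key : K ^ (-p) ≤ u s ^ (-p) * Dform (P s f) := by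
          calc K ^ (-p) = u s ^ (-p) * (u s ^ p * K ^ (-p)) := by
                rw [← mul_assoc, e3, one_mul]
            _ ≤ u s ^ (-p) * Dform (P s f) := by
                rw [← e1]; exact mul_le_mul_of_nonneg_left hDs e4.le
        have key2 : 2 * (p - 1) * K ^ (-p) ≤ 2 * (p - 1) * (u s ^ (-p) * Dform (P s f)) :=
          mul_le_mul_of_nonneg_left key (by linarith)
        rw [e2]
        nlinarith [key2]
    have hgle : g 0 ≤ g t :=
      hmono (Set.left_mem_Icc.mpr ht.le) (Set.right_mem_Icc.mpr ht.le) ht.le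
    have hu00 : 0 < u 0 ^ (1 - p) :=
      Real.rpow_pos_of_pos (hupos 0 (Set.left_mem_Icc.mpr ht.le)) _
    have h5 : κ * t ≤ u t ^ (1 - p) := by
      have h5' : u 0 ^ (1 - p) - κ * 0 ≤ u t ^ (1 - p) - κ * t := hgle
      nlinarith
    have hκt : 0 < κ * t := mul_pos hκ ht
    have h6 : u t ≤ (κ * t) ^ (1 - q) := by
      have h7 : (u t ^ (1 - p)) ^ (1 - q) ≤ (κ * t) ^ (1 - q) :=
        Real.rpow_le_rpow_of_nonpos hκt h5 h1q.le
      have h8 : (u t ^ (1 - p)) ^ (1 - q) = u t := by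
        rw [← Real.rpow_mul hutu.le, hid1, Real.rpow_one]
      linarith [h8 ▸ h7]
    have hκq : κ ^ (1 - q) = C' * N ^ 2 := by
      have hKq : K ^ q = C ^ q * N ^ 2 := by
        rw [hKdef, Real.mul_rpow hC.le (Real.rpow_nonneg hN0 _),
          ← Real.rpow_mul hN0, div_mul_cancel₀ 2 hq0]
        norm_num [Real.rpow_two]
      rw [hκdef, Real.mul_rpow (by linarith : (0:ℝ) ≤ 2 * (p - 1))
        (Real.rpow_nonneg hK.le _), ← Real.rpow_mul hK.le, hid2, hKq, hC'def]
      ring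
    calc u t ≤ (κ * t) ^ (1 - q) := h6
      _ = κ ^ (1 - q) * t ^ (1 - q) := Real.mul_rpow hκ.le ht.le
      _ = C' * N ^ 2 * t ^ (1 - q) := by rw [hκq]
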